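/- Every element g of G_BV can be written as g = L·M·R, where L belongs to the submonoid of G_BV generated by {v_i : i ∈ ℕ}, R belongs to the submonoid of G_BV generated by {v_i^{-1} : i ∈ ℕ}, and there exists h ≥ 1 such that M is of height containing h. -/

import Mathlib

namespace BrinStmt12

/-- The free-group generators for the presentation of `G_BV`:
`Sum.inl n` is `v_n`, `Sum.inr (Sum.inl n)` is `π_n`, and
`Sum.inr (Sum.inr n)` is `π̄_n`. -/
def vF (n : ℕ) : FreeGroup (ℕ ⊕ ℕ ⊕ ℕ) := FreeGroup.of (Sum.inl n)
def piF (n : ℕ) : FreeGroup (ℕ ⊕ ℕ ⊕ ℕ) := FreeGroup.of (Sum.inr (Sum.inl n))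
def opiF (n : ℕ) : FreeGroup (ℕ ⊕ ℕ ⊕ ℕ) := FreeGroup.of (Sum.inr (Sum.inr n))

/-- The relators (R1)–(R10) of the presentation of the group `G_BV`. -/
def gbvRels : Set (FreeGroup (ℕ ⊕ ℕ ⊕ ℕ)) :=
  { r | (∃ m q : ℕ, m < q ∧ r = vF q * vF m * (vF m * vF (q+1))⁻¹) ∨
        (∃ m q : ℕ, m < q ∧ r = piF q * vF m * (vF m * piF (q+1))⁻¹) ∨
        (∃ (m : ℕ) (e : ℤ), (e = 1 ∨ e = -1) ∧
            r = (piF m) ^ e * vF m *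
              (vF (m+1) * (piF m) ^ e * (piF (m+1)) ^ e)⁻¹) ∨
        (∃ m q : ℕ, q + 1 < m ∧ r = piF q * vF m * (vF m * piF q)⁻¹) ∨
        (∃ m q : ℕ, m < q ∧ r = opiF q * vF m * (vF m * opiF (q+1))⁻¹) ∨
        (∃ (m : ℕ) (e : ℤ), (e = 1 ∨ e = -1) ∧
            r = (opiF m) ^ e * vF m * ((piF m) ^ e * (opiF (m+1)) ^ e)⁻¹) ∨
        (∃ m q : ℕ, (m + 2 ≤ q ∨ q + 2 ≤ m) ∧
            r = piF q * piF m * (piF m * piF q)⁻¹) ∨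
        (∃ m : ℕ, r = piF m * piF (m+1) * piF m *
            (piF (m+1) * piF m * piF (m+1))⁻¹) ∨
        (∃ m q : ℕ, m + 2 ≤ q ∧ r = opiF q * piF m * (piF m * opiF q)⁻¹) ∨
        (∃ m : ℕ, r = piF m * opiF (m+1) * piF m *
            (opiF (m+1) * piF m * opiF (m+1))⁻¹) }

/-- The group `G_BV`, presented by generators `v_n, π_n, π̄_n` and relations (R1)–(R10). -/
abbrev GBV := PresentedGroup gbvRels

/-- The generator `v_n` of `G_BV`. -/
def vG (n : ℕ) : GBV := PresentedGroup.of (Sum.inl n)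
/-- The generator `π_n` of `G_BV`. -/
def piG (n : ℕ) : GBV := PresentedGroup.of (Sum.inr (Sum.inl n))
/-- The generator `π̄_n` of `G_BV`. -/
def opiG (n : ℕ) : GBV := PresentedGroup.of (Sum.inr (Sum.inr n))

/-- For `h ≥ 1`, the element `M` of `G_BV` is of height containing `h` if it is a
product of factors each of which is `π_i^{±1}` with `i ≤ h-2` (i.e. `i + 2 ≤ h`)
or `π̄_{h-1}^{±1}`; equivalently, `M` lies in the subgroup generated by the
`π_i` with `i + 2 ≤ h` together with `π̄_{h-1}`. -/
def HeightContains (h : ℕ) (M : GBV) : Prop :=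
  M ∈ Subgroup.closure ({x : GBV | ∃ i, i + 2 ≤ h ∧ x = piG i} ∪ {opiG (h-1)})

/-! ### Auxiliary development for the proof -/

namespace LMRProof

open Submonoid Subgroup List

/-- Signed generator: `pw x true = x`, `pw x false = x⁻¹`. -/
def pw {G : Type*} [Group G] (x : G) (e : Bool) : G := if e then x else x⁻¹

@[simp] lemma pw_true {G : Type*} [Group G] (x : G) : pw x true = x := rfl
@[simp] lemma pw_false {G : Type*} [Group G] (x : G) : pw x false = x⁻¹ := rfl

lemma pw_not {G : Type*} [Group G] (x : G) (e : Bool) : pw x (!e) = (pw x e)⁻¹ := by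
  cases e <;> simp

private lemma swap_inv {G : Type*} [Group G] {a b c : G} (h : a * b = b * c) :
    a⁻¹ * b = b * c⁻¹ := by
  have h2 : a⁻¹ * (b * c) * c⁻¹ = a⁻¹ * (a * b) * c⁻¹ := by rw [h]
  simpa [mul_assoc] using h2

private lemma swap_inv2 {G : Type*} [Group G] {a b c : G} (h : a * b = b * c) :
    b⁻¹ * a = c * b⁻¹ := by
  have h2 : b⁻¹ * (a * b) * b⁻¹ = b⁻¹ * (b * c) * b⁻¹ := by rw [h]
  simpa [mul_assoc] using h2

/-- The quotient map as a monoid hom. -/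
abbrev mkG : FreeGroup (ℕ ⊕ ℕ ⊕ ℕ) →* GBV := PresentedGroup.mk gbvRels

lemma rel_one {r : FreeGroup (ℕ ⊕ ℕ ⊕ ℕ)} (h : r ∈ gbvRels) : mkG r = 1 := by
  have h2 : r ∈ Subgroup.normalClosure gbvRels := Subgroup.subset_normalClosure h
  exact (QuotientGroup.eq_one_iff r).mpr h2

lemma rel_eq {a b : FreeGroup (ℕ ⊕ ℕ ⊕ ℕ)} (h : a * b⁻¹ ∈ gbvRels) : mkG a = mkG b := by
  have h1 := rel_one h
  rwa [map_mul, map_inv, mul_inv_eq_one] at h1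

@[simp] lemma mkG_vF (n : ℕ) : mkG (vF n) = vG n := rfl
@[simp] lemma mkG_piF (n : ℕ) : mkG (piF n) = piG n := rfl
@[simp] lemma mkG_opiF (n : ℕ) : mkG (opiF n) = opiG n := rfl

/-- (R1) -/
lemma rel_vv {m q : ℕ} (h : m < q) : vG q * vG m = vG m * vG (q+1) := by
  have := rel_eq (Or.inl ⟨m, q, h, rfl⟩)
  simpa using this

/-- (R2), both signs -/
lemma rel_piv_lt (e : Bool) {m q : ℕ} (h : m < q) :
    pw (piG q) e * vG m = vG m * pw (piG (q+1)) e := by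
  have base : piG q * vG m = vG m * piG (q+1) := by
    have := rel_eq (Or.inr (Or.inl ⟨m, q, h, rfl⟩))
    simpa using this
  cases e
  · simpa using swap_inv base
  · simpa using base

/-- (R3), both signs -/
lemma rel_piv_eq (e : Bool) (m : ℕ) :
    pw (piG m) e * vG m = vG (m+1) * (pw (piG m) e * pw (piG (m+1)) e) := by
  cases e
  · have := rel_eq (Or.inr (Or.inr (Or.inl ⟨m, -1, Or.inr rfl, rfl⟩)))
    simp only [zpow_neg_one, map_mul, map_inv, mkG_piF, mkG_vF] at this
    simpa [mul_assoc] using this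
  · have := rel_eq (Or.inr (Or.inr (Or.inl ⟨m, 1, Or.inl rfl, rfl⟩)))
    simp only [zpow_one, map_mul, mkG_piF, mkG_vF] at this
    simpa [mul_assoc] using this

/-- (R4), both signs -/
lemma rel_piv_gt (e : Bool) {m q : ℕ} (h : q + 1 < m) :
    pw (piG q) e * vG m = vG m * pw (piG q) e := by
  have base : piG q * vG m = vG m * piG q := by
    have := rel_eq (Or.inr (Or.inr (Or.inr (Or.inl ⟨m, q, h, rfl⟩))))
    simpa using this
  cases e
  · simpa using swap_inv base
  · simpa using base

/-- (R5), both signs -/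
lemma rel_opiv_lt (e : Bool) {m q : ℕ} (h : m < q) :
    pw (opiG q) e * vG m = vG m * pw (opiG (q+1)) e := by
  have base : opiG q * vG m = vG m * opiG (q+1) := by
    have := rel_eq (Or.inr (Or.inr (Or.inr (Or.inr (Or.inl ⟨m, q, h, rfl⟩)))))
    simpa using this
  cases e
  · simpa using swap_inv base
  · simpa using base

/-- (R6), both signs -/
lemma rel_opiv_eq (e : Bool) (m : ℕ) :
    pw (opiG m) e * vG m = pw (piG m) e * pw (opiG (m+1)) e := by
  cases e
  · have := rel_eq (Or.inr (Or.inr (Or.inr (Or.inr (Or.inr (Or.inl ⟨m, -1, Or.inr rfl, rfl⟩))))))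
    simp only [zpow_neg_one, map_mul, map_inv, mkG_piF, mkG_vF, mkG_opiF] at this
    simpa [mul_assoc] using this
  · have := rel_eq (Or.inr (Or.inr (Or.inr (Or.inr (Or.inr (Or.inl ⟨m, 1, Or.inl rfl, rfl⟩))))))
    simp only [zpow_one, map_mul, mkG_piF, mkG_vF, mkG_opiF] at this
    simpa [mul_assoc] using this

/-- Derived: `π_q^ε v_{q+1} = v_q (π_{q+1}^ε π_q^ε)`. -/
lemma rel_piv_succ (e : Bool) (q : ℕ) :
    pw (piG q) e * vG (q+1) = vG q * (pw (piG (q+1)) e * pw (piG q) e) := by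
  have h1 : (pw (piG q) e)⁻¹ * vG q
      = vG (q+1) * ((pw (piG q) e)⁻¹ * (pw (piG (q+1)) e)⁻¹) := by
    have := rel_piv_eq (!e) q
    simpa [pw_not] using this
  have h2 : vG q = pw (piG q) e * (vG (q+1) * ((pw (piG q) e)⁻¹ * (pw (piG (q+1)) e)⁻¹)) := by
    rw [← h1]; group
  rw [h2]; group

/-- Derived (K1): `π̄_n^ε = v_n (π̄_{n+1}^ε π_n^ε)`. -/
lemma rel_K1 (e : Bool) (n : ℕ) :
    pw (opiG n) e = vG n * (pw (opiG (n+1)) e * pw (piG n) e) := by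
  have h1 : (pw (opiG n) e)⁻¹ * vG n
      = (pw (piG n) e)⁻¹ * (pw (opiG (n+1)) e)⁻¹ := by
    have := rel_opiv_eq (!e) n
    simpa [pw_not] using this
  have h2 : vG n = pw (opiG n) e * ((pw (piG n) e)⁻¹ * (pw (opiG (n+1)) e)⁻¹) := by
    rw [← h1]; group
  rw [h2]; group

/-- Derived: `v_q⁻¹ v_m = v_m v_{q+1}⁻¹` for `m < q`. -/
lemma rel_wv_lt {m q : ℕ} (h : m < q) : (vG q)⁻¹ * vG m = vG m * (vG (q+1))⁻¹ :=
  swap_inv (rel_vv h)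

/-- Derived: `v_q⁻¹ v_m = v_{m+1} v_q⁻¹` for `q < m`. -/
lemma rel_wv_gt {m q : ℕ} (h : q < m) : (vG q)⁻¹ * vG m = vG (m+1) * (vG q)⁻¹ :=
  swap_inv2 (rel_vv h)

/-! ### The submonoids and subgroups -/

def Vset : Set GBV := {x : GBV | ∃ i, x = vG i}
def Wset : Set GBV := {x : GBV | ∃ i, x = (vG i)⁻¹}
def Vm : Submonoid GBV := Submonoid.closure Vset
def Wm : Submonoid GBV := Submonoid.closure Wset

lemma vG_mem_Vm (i : ℕ) : vG i ∈ Vm := subset_closure ⟨i, rfl⟩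
lemma vGinv_mem_Wm (i : ℕ) : (vG i)⁻¹ ∈ Wm := subset_closure ⟨i, rfl⟩

lemma Vm_inv_Wm {L : GBV} (h : L ∈ Vm) : L⁻¹ ∈ Wm := by
  induction h using Submonoid.closure_induction with
  | mem x hx => obtain ⟨i, rfl⟩ := hx; exact vGinv_mem_Wm i
  | one => simpa using one_mem Wm
  | mul a b _ _ ha hb => rw [mul_inv_rev]; exact mul_mem hb ha

lemma Wm_inv_Vm {R : GBV} (h : R ∈ Wm) : R⁻¹ ∈ Vm := by
  induction h using Submonoid.closure_induction with
  | mem x hx => obtain ⟨i, rfl⟩ := hx; simpa using vG_mem_Vm i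
  | one => simpa using one_mem Vm
  | mul a b _ _ ha hb => rw [mul_inv_rev]; exact mul_mem hb ha

def hSet (k : ℕ) : Set GBV := {x : GBV | ∃ i, i + 1 ≤ k ∧ x = piG i} ∪ {opiG k}
def Hk (k : ℕ) : Subgroup GBV := Subgroup.closure (hSet k)

lemma piG_mem_Hk {i K : ℕ} (h : i + 1 ≤ K) : piG i ∈ Hk K :=
  subset_closure (Or.inl ⟨i, h, rfl⟩)

lemma opiG_mem_Hk (K : ℕ) : opiG K ∈ Hk K :=
  subset_closure (Or.inr rfl)

lemma pw_mem {G : Type*} [Group G] {H : Subgroup G} {x : G} (h : x ∈ H) (e : Bool) :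
    pw x e ∈ H := by
  cases e
  · simpa using inv_mem h
  · simpa using h

def pSet (k : ℕ) : Set GBV := {x : GBV | ∃ i e, i ≤ k ∧ x = pw (piG i) e}
def Pb (k : ℕ) : Submonoid GBV := Submonoid.closure (pSet k)

lemma pw_piG_mem_Pb {i k : ℕ} (h : i ≤ k) (e : Bool) : pw (piG i) e ∈ Pb k :=
  subset_closure ⟨i, e, h, rfl⟩

lemma Pb_mono {k k' : ℕ} (h : k ≤ k') : Pb k ≤ Pb k' :=
  closure_mono (fun x hx => by obtain ⟨i, e, hi, rfl⟩ := hx; exact ⟨i, e, le_trans hi h, rfl⟩)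

lemma Pb_le_Hk {k K : ℕ} (h : k + 1 ≤ K) {P : GBV} (hP : P ∈ Pb k) : P ∈ Hk K := by
  induction hP using Submonoid.closure_induction with
  | mem x hx =>
      obtain ⟨i, e, hi, rfl⟩ := hx
      exact pw_mem (piG_mem_Hk (by omega)) e
  | one => exact one_mem _
  | mul a b _ _ ha hb => exact mul_mem ha hb

/-! ### Crossing a `v`-generator through words of `π`'s -/

/-- A single signed `π`-letter crosses a `v`-generator, with indices raised by at most one. -/
lemma pi_v_cross (i m : ℕ) (e : Bool) :
    ∃ m' P, P ∈ Pb (i+1) ∧ pw (piG i) e * vG m = vG m' * P := by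
  rcases lt_trichotomy m i with h | rfl | h
  · exact ⟨m, pw (piG (i+1)) e, pw_piG_mem_Pb le_rfl e, rel_piv_lt e h⟩
  · exact ⟨m+1, pw (piG m) e * pw (piG (m+1)) e,
      mul_mem (pw_piG_mem_Pb (by omega) e) (pw_piG_mem_Pb le_rfl e), rel_piv_eq e m⟩
  · rcases eq_or_lt_of_le (Nat.succ_le_of_lt h) with h1 | h1
    · refine ⟨i, pw (piG (i+1)) e * pw (piG i) e,
        mul_mem (pw_piG_mem_Pb le_rfl e) (pw_piG_mem_Pb (by omega) e), ?_⟩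
      rw [← h1]
      exact rel_piv_succ e i
    · exact ⟨m, pw (piG i) e, pw_piG_mem_Pb (by omega) e, rel_piv_gt e h1⟩

lemma Pb_cross {k : ℕ} {P : GBV} (hP : P ∈ Pb k) :
    ∀ m, ∃ m' P', P' ∈ Pb (k+1) ∧ P * vG m = vG m' * P' := by
  induction hP using Submonoid.closure_induction with
  | mem x hx =>
      intro m
      obtain ⟨i, e, hi, rfl⟩ := hx
      obtain ⟨m', P, hP, hEq⟩ := pi_v_cross i m e
      exact ⟨m', P, Pb_mono (by omega) hP, hEq⟩
  | one => intro m; exact ⟨m, 1, one_mem _, by simp⟩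
  | mul a b _ _ ha hb =>
      intro m
      obtain ⟨m₁, b', hb', hEqb⟩ := hb m
      obtain ⟨m₂, a', ha', hEqa⟩ := ha m₁
      refine ⟨m₂, a' * b', mul_mem ha' hb', ?_⟩
      calc a * b * vG m = a * (b * vG m) := by rw [mul_assoc]
        _ = a * (vG m₁ * b') := by rw [hEqb]
        _ = (a * vG m₁) * b' := by rw [mul_assoc]
        _ = (vG m₂ * a') * b' := by rw [hEqa]
        _ = vG m₂ * (a' * b') := by rw [mul_assoc]

lemma Pb_cross_list :
    ∀ (l : List GBV), (∀ y ∈ l, y ∈ Vset) → ∀ {k : ℕ} {P : GBV}, P ∈ Pb k →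
    ∃ (l' : List GBV) (k' : ℕ) (P' : GBV), (∀ y ∈ l', y ∈ Vset) ∧ l'.length = l.length ∧
      P' ∈ Pb k' ∧ P * l.prod = l'.prod * P' := by
  intro l
  induction l with
  | nil => intro _ k P hP; exact ⟨[], k, P, by simp, rfl, hP, by simp⟩
  | cons y l₀ ih =>
      intro hl k P hP
      obtain ⟨m, rfl⟩ := hl y (by simp)
      have hl₀ : ∀ y ∈ l₀, y ∈ Vset := fun z hz => hl z (by simp [hz])
      obtain ⟨m', P₁, hP₁, hEq1⟩ := Pb_cross hP m
      obtain ⟨l₁, k₁, P', hl₁, hlen₁, hP', hEq2⟩ := ih hl₀ hP₁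
      refine ⟨vG m' :: l₁, k₁, P', ?_, by simp [hlen₁], hP', ?_⟩
      · intro z hz
        rcases List.mem_cons.mp hz with rfl | hz
        · exact ⟨m', rfl⟩
        · exact hl₁ z hz
      · calc P * (vG m :: l₀).prod = P * (vG m * l₀.prod) := by rw [List.prod_cons]
          _ = (P * vG m) * l₀.prod := by rw [mul_assoc]
          _ = vG m' * (P₁ * l₀.prod) := by rw [hEq1, mul_assoc]
          _ = vG m' * (l₁.prod * P') := by rw [hEq2]
          _ = (vG m' :: l₁).prod * P' := by rw [List.prod_cons, mul_assoc]

/-! ### The crossing/raising lemma for height subgroups -/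

lemma letter_shape {k : ℕ} {y : GBV} (h : y ∈ hSet k ∪ (hSet k)⁻¹) :
    (∃ i e, i + 1 ≤ k ∧ y = pw (piG i) e) ∨ (∃ e, y = pw (opiG k) e) := by
  rcases h with h | h
  · rcases h with ⟨i, hi, rfl⟩ | h
    · exact Or.inl ⟨i, true, hi, rfl⟩
    · exact Or.inr ⟨true, by simpa using h⟩
  · rw [Set.mem_inv] at h
    rcases h with ⟨i, hi, hy⟩ | h
    · exact Or.inl ⟨i, false, hi, by rw [pw_false, ← hy, inv_inv]⟩
    · refine Or.inr ⟨false, ?_⟩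
      have : y⁻¹ = opiG k := h
      rw [pw_false, ← this, inv_inv]

/-- Crossing a single H-π-letter over a `v_m` with `m ≤ k`. -/
lemma pi_letter_cross {k i : ℕ} (hi : i + 1 ≤ k) (e : Bool) {m : ℕ} (hm : m ≤ k) :
    ∃ m' P, m' ≤ k ∧ P ∈ Hk (k+1) ∧ pw (piG i) e * vG m = vG m' * P := by
  rcases lt_trichotomy m i with h | rfl | h
  · exact ⟨m, pw (piG (i+1)) e, hm, pw_mem (piG_mem_Hk (by omega)) e, rel_piv_lt e h⟩
  · exact ⟨m+1, pw (piG m) e * pw (piG (m+1)) e, hi,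
      mul_mem (pw_mem (piG_mem_Hk (by omega)) e) (pw_mem (piG_mem_Hk (by omega)) e),
      rel_piv_eq e m⟩
  · rcases eq_or_lt_of_le (Nat.succ_le_of_lt h) with h1 | h1
    · refine ⟨i, pw (piG (i+1)) e * pw (piG i) e, by omega,
        mul_mem (pw_mem (piG_mem_Hk (by omega)) e) (pw_mem (piG_mem_Hk (by omega)) e), ?_⟩
      rw [← h1]
      exact rel_piv_succ e i
    · exact ⟨m, pw (piG i) e, hm, pw_mem (piG_mem_Hk (by omega)) e, rel_piv_gt e h1⟩

/-- The key mutual crossing/raising lemma, on words. -/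
lemma cross_raise (k : ℕ) (l : List GBV) :
    (∀ y ∈ l, y ∈ hSet k ∪ (hSet k)⁻¹) →
    (∃ L ∈ Vm, ∃ M' ∈ Hk (k+1), l.prod = L * M') ∧
    (∀ m, m ≤ k → ∃ L ∈ Vm, ∃ M' ∈ Hk (k+1), l.prod * vG m = L * M') := by
  induction l using List.reverseRecOn with
  | nil =>
      intro _
      constructor
      · exact ⟨1, one_mem _, 1, one_mem _, by simp⟩
      · intro m _; exact ⟨vG m, vG_mem_Vm m, 1, one_mem _, by simp⟩
  | append_singleton l x ih =>
      intro hgood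
      have hl : ∀ y ∈ l, y ∈ hSet k ∪ (hSet k)⁻¹ := fun y hy => hgood y (by simp [hy])
      obtain ⟨ihR, ihC⟩ := ih hl
      have hx := letter_shape (hgood x (by simp))
      have hprod : (l ++ [x]).prod = l.prod * x := by simp
      constructor
      · -- RAISE
        rcases hx with ⟨i, e, hi, rfl⟩ | ⟨e, rfl⟩
        · obtain ⟨L, hL, M', hM', hEq⟩ := ihR
          refine ⟨L, hL, M' * pw (piG i) e,
            mul_mem hM' (pw_mem (piG_mem_Hk (by omega)) e), ?_⟩
          rw [hprod, hEq, mul_assoc]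
        · obtain ⟨L, hL, M', hM', hEq⟩ := ihC k le_rfl
          refine ⟨L, hL, M' * (pw (opiG (k+1)) e * pw (piG k) e),
            mul_mem hM' (mul_mem (pw_mem (opiG_mem_Hk (k+1)) e)
              (pw_mem (piG_mem_Hk (by omega)) e)), ?_⟩
          calc (l ++ [pw (opiG k) e]).prod
              = l.prod * pw (opiG k) e := hprod
            _ = l.prod * (vG k * (pw (opiG (k+1)) e * pw (piG k) e)) := by rw [← rel_K1]
            _ = (l.prod * vG k) * (pw (opiG (k+1)) e * pw (piG k) e) := by rw [mul_assoc]
            _ = (L * M') * (pw (opiG (k+1)) e * pw (piG k) e) := by rw [hEq]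
            _ = L * (M' * (pw (opiG (k+1)) e * pw (piG k) e)) := by rw [mul_assoc]
      · -- CROSS
        intro m hm
        rcases hx with ⟨i, e, hi, rfl⟩ | ⟨e, rfl⟩
        · obtain ⟨m', P, hm', hP, hxv⟩ := pi_letter_cross hi e hm
          obtain ⟨L, hL, M', hM', hEq⟩ := ihC m' hm'
          refine ⟨L, hL, M' * P, mul_mem hM' hP, ?_⟩
          calc (l ++ [pw (piG i) e]).prod * vG m
              = l.prod * (pw (piG i) e * vG m) := by rw [hprod, mul_assoc]
            _ = l.prod * (vG m' * P) := by rw [hxv]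
            _ = (l.prod * vG m') * P := by rw [mul_assoc]
            _ = (L * M') * P := by rw [hEq]
            _ = L * (M' * P) := by rw [mul_assoc]
        · rcases eq_or_lt_of_le hm with h1 | h1
          · -- m = k : consume
            obtain ⟨L, hL, M', hM', hEq⟩ := ihR
            refine ⟨L, hL, M' * (pw (piG k) e * pw (opiG (k+1)) e),
              mul_mem hM' (mul_mem (pw_mem (piG_mem_Hk (by omega)) e)
                (pw_mem (opiG_mem_Hk (k+1)) e)), ?_⟩
            subst h1
            calc (l ++ [pw (opiG m) e]).prod * vG m
                = l.prod * (pw (opiG m) e * vG m) := by rw [hprod, mul_assoc]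
              _ = l.prod * (pw (piG m) e * pw (opiG (m+1)) e) := by rw [rel_opiv_eq]
              _ = (L * M') * (pw (piG m) e * pw (opiG (m+1)) e) := by rw [hEq]
              _ = L * (M' * (pw (piG m) e * pw (opiG (m+1)) e)) := by rw [mul_assoc]
          · -- m < k : raise
            obtain ⟨L, hL, M', hM', hEq⟩ := ihC m hm
            refine ⟨L, hL, M' * pw (opiG (k+1)) e,
              mul_mem hM' (pw_mem (opiG_mem_Hk (k+1)) e), ?_⟩
            calc (l ++ [pw (opiG k) e]).prod * vG m
                = l.prod * (pw (opiG k) e * vG m) := by rw [hprod, mul_assoc]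
              _ = l.prod * (vG m * pw (opiG (k+1)) e) := by rw [rel_opiv_lt e h1]
              _ = (l.prod * vG m) * pw (opiG (k+1)) e := by rw [mul_assoc]
              _ = (L * M') * pw (opiG (k+1)) e := by rw [hEq]
              _ = L * (M' * pw (opiG (k+1)) e) := by rw [mul_assoc]

lemma Hk_as_words {k : ℕ} {M : GBV} (hM : M ∈ Hk k) :
    ∃ l : List GBV, (∀ y ∈ l, y ∈ hSet k ∪ (hSet k)⁻¹) ∧ l.prod = M := by
  have h1 : M ∈ (Hk k).toSubmonoid := hM
  rw [Hk, Subgroup.closure_toSubmonoid] at h1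
  exact Submonoid.exists_list_of_mem_closure h1

/-- Raising the height by one. -/
lemma raise_step {k : ℕ} {M : GBV} (hM : M ∈ Hk k) :
    ∃ L ∈ Vm, ∃ M' ∈ Hk (k+1), M = L * M' := by
  obtain ⟨l, hl, rfl⟩ := Hk_as_words hM
  exact (cross_raise k l hl).1

/-- Crossing a small `v` from the right. -/
lemma cross_step {k m : ℕ} (hm : m ≤ k) {M : GBV} (hM : M ∈ Hk k) :
    ∃ L ∈ Vm, ∃ M' ∈ Hk (k+1), M * vG m = L * M' := by
  obtain ⟨l, hl, rfl⟩ := Hk_as_words hM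
  exact (cross_raise k l hl).2 m hm

lemma raise_le {k K : ℕ} (h : k ≤ K) {M : GBV} (hM : M ∈ Hk k) :
    ∃ L ∈ Vm, ∃ M' ∈ Hk K, M = L * M' := by
  induction K, h using Nat.le_induction with
  | base => exact ⟨1, one_mem _, M, hM, by simp⟩
  | succ K _ ih =>
      obtain ⟨L, hL, M', hM', hEq⟩ := ih
      obtain ⟨L₂, hL₂, M₂, hM₂, hEq₂⟩ := raise_step hM'
      exact ⟨L * L₂, mul_mem hL hL₂, M₂, hM₂, by rw [hEq, hEq₂, mul_assoc]⟩

/-- Mirror: raising with junk to the right. -/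
lemma raiseR_le {k K : ℕ} (h : k ≤ K) {M : GBV} (hM : M ∈ Hk k) :
    ∃ M' ∈ Hk K, ∃ R ∈ Wm, M = M' * R := by
  obtain ⟨L, hL, N, hN, hEq⟩ := raise_le h (inv_mem hM)
  refine ⟨N⁻¹, inv_mem hN, L⁻¹, Vm_inv_Wm hL, ?_⟩
  have := congrArg (·⁻¹) hEq
  simpa [mul_inv_rev] using this

/-- Mirror: crossing a small `v⁻¹` from the left. -/
lemma crossL_step {k m : ℕ} (hm : m ≤ k) {M : GBV} (hM : M ∈ Hk k) :
    ∃ M' ∈ Hk (k+1), ∃ R ∈ Wm, (vG m)⁻¹ * M = M' * R := by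
  obtain ⟨L, hL, N, hN, hEq⟩ := cross_step hm (inv_mem hM)
  refine ⟨N⁻¹, inv_mem hN, L⁻¹, Vm_inv_Wm hL, ?_⟩
  have h2 := congrArg (·⁻¹) hEq
  simpa [mul_inv_rev] using h2

/-! ### v⁻¹ through the positive monoid -/

lemma vinv_V {L : GBV} (hL : L ∈ Vm) :
    ∀ q, (∃ L' ∈ Vm, (vG q)⁻¹ * L = L') ∨
      (∃ L' ∈ Vm, ∃ q', (vG q)⁻¹ * L = L' * (vG q')⁻¹) := by
  induction hL using Submonoid.closure_induction with
  | mem x hx =>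
      obtain ⟨m, rfl⟩ := hx
      intro q
      rcases lt_trichotomy q m with h | rfl | h
      · exact Or.inr ⟨vG (m+1), vG_mem_Vm _, q, rel_wv_gt h⟩
      · exact Or.inl ⟨1, one_mem _, by simp⟩
      · exact Or.inr ⟨vG m, vG_mem_Vm _, q+1, rel_wv_lt h⟩
  | one => intro q; exact Or.inr ⟨1, one_mem _, q, by simp⟩
  | mul a b _ _ ha hb =>
      intro q
      rcases ha q with ⟨a', ha', hEq⟩ | ⟨a', ha', q₁, hEq⟩
      · refine Or.inl ⟨a' * b, mul_mem ha' ‹b ∈ Vm›, ?_⟩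
        · rw [← mul_assoc, hEq]
      · rcases hb q₁ with ⟨b', hb', hEqb⟩ | ⟨b', hb', q₂, hEqb⟩
        · refine Or.inl ⟨a' * b', mul_mem ha' hb', ?_⟩
          calc (vG q)⁻¹ * (a * b) = ((vG q)⁻¹ * a) * b := by rw [mul_assoc]
            _ = a' * ((vG q₁)⁻¹ * b) := by rw [hEq, mul_assoc]
            _ = a' * b' := by rw [hEqb]
        · refine Or.inr ⟨a' * b', mul_mem ha' hb', q₂, ?_⟩
          calc (vG q)⁻¹ * (a * b) = ((vG q)⁻¹ * a) * b := by rw [mul_assoc]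
            _ = a' * ((vG q₁)⁻¹ * b) := by rw [hEq, mul_assoc]
            _ = a' * (b' * (vG q₂)⁻¹) := by rw [hEqb]
            _ = (a' * b') * (vG q₂)⁻¹ := by rw [mul_assoc]

/-! ### Expansion of π̄ to arbitrary large index -/

lemma opi_expand (e : Bool) : ∀ (d n : ℕ), ∃ A ∈ Vm, ∃ D ∈ Hk (n+d),
    pw (opiG n) e = A * (pw (opiG (n+d)) e * D) := by
  intro d
  induction d with
  | zero => intro n; exact ⟨1, one_mem _, 1, one_mem _, by simp⟩
  | succ d ih =>
      intro n
      obtain ⟨A, hA, D, hD, hEq⟩ := ih (n+1)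
      have hidx : n + 1 + d = n + (d+1) := by omega
      rw [hidx] at hD hEq
      refine ⟨vG n * A, mul_mem (vG_mem_Vm n) hA,
        D * pw (piG n) e, mul_mem hD (pw_mem (piG_mem_Hk (by omega)) e), ?_⟩
      calc pw (opiG n) e = vG n * (pw (opiG (n+1)) e * pw (piG n) e) := rel_K1 e n
        _ = vG n * ((A * (pw (opiG (n+(d+1))) e * D)) * pw (piG n) e) := by rw [← hEq]
        _ = (vG n * A) * (pw (opiG (n+(d+1))) e * (D * pw (piG n) e)) := by group

/-! ### The LMR property -/

def IsLMR (g : GBV) : Prop :=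
  ∃ L M R k, L ∈ Vm ∧ M ∈ Hk k ∧ R ∈ Wm ∧ g = L * (M * R)

lemma isLMR_one : IsLMR 1 := ⟨1, 1, 1, 0, one_mem _, one_mem _, one_mem _, by simp⟩

lemma isLMR_v (n : ℕ) {g : GBV} (h : IsLMR g) : IsLMR (vG n * g) := by
  obtain ⟨L, M, R, k, hL, hM, hR, rfl⟩ := h
  exact ⟨vG n * L, M, R, k, mul_mem (vG_mem_Vm n) hL, hM, hR, by rw [mul_assoc]⟩

lemma isLMR_vinv (n : ℕ) {g : GBV} (h : IsLMR g) : IsLMR ((vG n)⁻¹ * g) := by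
  obtain ⟨L, M, R, k, hL, hM, hR, rfl⟩ := h
  rcases vinv_V hL n with ⟨L', hL', hEq⟩ | ⟨L', hL', q', hEq⟩
  · exact ⟨L', M, R, k, hL', hM, hR, by rw [← mul_assoc, hEq]⟩
  · obtain ⟨M₂, hM₂, R₂, hR₂, hEqM⟩ := raiseR_le (le_max_left k q') hM
    obtain ⟨M₃, hM₃, R₃, hR₃, hEqC⟩ := crossL_step (le_max_right k q') hM₂
    refine ⟨L', M₃, R₃ * (R₂ * R), max k q' + 1, hL', hM₃,
      mul_mem hR₃ (mul_mem hR₂ hR), ?_⟩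
    calc (vG n)⁻¹ * (L * (M * R))
        = ((vG n)⁻¹ * L) * (M * R) := by rw [mul_assoc]
      _ = (L' * (vG q')⁻¹) * ((M₂ * R₂) * R) := by rw [hEq, hEqM]
      _ = L' * (((vG q')⁻¹ * M₂) * (R₂ * R)) := by group
      _ = L' * ((M₃ * R₃) * (R₂ * R)) := by rw [hEqC]
      _ = L' * (M₃ * (R₃ * (R₂ * R))) := by group

/-- Pushing a signed π-letter into an LMR-presentation, preserving the length of the
positive part. -/
lemma pi_into (t : ℕ) (e : Bool) (l : List GBV) (hl : ∀ y ∈ l, y ∈ Vset)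
    {M : GBV} {k : ℕ} {R : GBV} (hM : M ∈ Hk k) (hR : R ∈ Wm) :
    ∃ (l' : List GBV) (M' : GBV) (k' : ℕ) (R' : GBV),
      (∀ y ∈ l', y ∈ Vset) ∧ l'.length = l.length ∧ M' ∈ Hk k' ∧ R' ∈ Wm ∧
      pw (piG t) e * (l.prod * (M * R)) = l'.prod * (M' * R') := by
  obtain ⟨l', k', P', hl', hlen, hP', hEq⟩ := Pb_cross_list l hl (pw_piG_mem_Pb (le_refl t) e)
  obtain ⟨M₂, hM₂, R₂, hR₂, hEqM⟩ := raiseR_le (le_max_left k (k'+1)) hM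
  have hP'H : P' ∈ Hk (max k (k'+1)) := Pb_le_Hk (le_max_right _ _) hP'
  refine ⟨l', P' * M₂, max k (k'+1), R₂ * R, hl', hlen, mul_mem hP'H hM₂,
    mul_mem hR₂ hR, ?_⟩
  calc pw (piG t) e * (l.prod * (M * R))
      = (pw (piG t) e * l.prod) * (M * R) := by rw [mul_assoc]
    _ = (l'.prod * P') * ((M₂ * R₂) * R) := by rw [hEq, hEqM]
    _ = l'.prod * ((P' * M₂) * (R₂ * R)) := by group

lemma list_Vset_prod_mem {l : List GBV} (hl : ∀ y ∈ l, y ∈ Vset) : l.prod ∈ Vm :=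
  list_prod_mem (fun x hx => subset_closure (hl x hx))

lemma isLMR_pi (t : ℕ) (e : Bool) {g : GBV} (h : IsLMR g) : IsLMR (pw (piG t) e * g) := by
  obtain ⟨L, M, R, k, hL, hM, hR, rfl⟩ := h
  obtain ⟨l, hl, rfl⟩ := Submonoid.exists_list_of_mem_closure hL
  obtain ⟨l', M', k', R', hl', _, hM', hR', hEq⟩ := pi_into t e l hl hM hR
  exact ⟨l'.prod, M', R', k', list_Vset_prod_mem hl', hM', hR', hEq⟩

/-! ### Pushing π̄ into an LMR presentation -/

/-- Base case: no positive part. -/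
lemma opi_base (n : ℕ) (e : Bool) {M : GBV} {k : ℕ} {R : GBV}
    (hM : M ∈ Hk k) (hR : R ∈ Wm) : IsLMR (pw (opiG n) e * (M * R)) := by
  rcases le_or_gt k n with hkn | hnk
  · obtain ⟨M₂, hM₂, R₂, hR₂, hEqM⟩ := raiseR_le hkn hM
    refine ⟨1, pw (opiG n) e * M₂, R₂ * R, n, one_mem _,
      mul_mem (pw_mem (opiG_mem_Hk n) e) hM₂, mul_mem hR₂ hR, ?_⟩
    rw [hEqM]; group
  · obtain ⟨A, hA, D, hD, hEqO⟩ := opi_expand e (k - n) n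
    have hnd : n + (k - n) = k := by omega
    rw [hnd] at hD hEqO
    refine ⟨A, (pw (opiG k) e * D) * M, R, k, hA,
      mul_mem (mul_mem (pw_mem (opiG_mem_Hk k) e) hD) hM, hR, ?_⟩
    rw [hEqO]; group

/-- The gap-reduction lemma: pushing `π̄_n^e` past a first letter `v_m` with `n < m`. -/
lemma opi_gap (ℓ₀ : ℕ)
    (IH : ∀ (l : List GBV), l.length = ℓ₀ → (∀ y ∈ l, y ∈ Vset) →
      ∀ (n : ℕ) (e : Bool) (M : GBV) (k : ℕ) (R : GBV), M ∈ Hk k → R ∈ Wm →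
        IsLMR (pw (opiG n) e * (l.prod * (M * R)))) :
    ∀ (d n m : ℕ), m = n + d + 1 → ∀ (e : Bool) (l : List GBV),
      l.length = ℓ₀ → (∀ y ∈ l, y ∈ Vset) →
      ∀ (M : GBV) (k : ℕ) (R : GBV), M ∈ Hk k → R ∈ Wm →
      IsLMR (pw (opiG n) e * (vG m * (l.prod * (M * R)))) := by
  intro d
  induction d with
  | zero =>
      intro n m hm e l hlen hl M k R hM hR
      subst hm
      have chain : pw (opiG n) e * (vG (n+0+1) * (l.prod * (M * R)))
          = vG n * (vG n * (pw (opiG (n+2)) e *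
              (pw (piG (n+1)) e * (pw (piG n) e * (l.prod * (M * R)))))) := by
        have h0 : n + 0 + 1 = n + 1 := by omega
        rw [h0]
        calc pw (opiG n) e * (vG (n+1) * (l.prod * (M * R)))
            = (vG n * (pw (opiG (n+1)) e * pw (piG n) e)) * (vG (n+1) * (l.prod * (M * R))) := by
              rw [← rel_K1]
          _ = vG n * (pw (opiG (n+1)) e * ((pw (piG n) e * vG (n+1)) * (l.prod * (M * R)))) := by
              group
          _ = vG n * (pw (opiG (n+1)) e * ((vG n * (pw (piG (n+1)) e * pw (piG n) e)) *
                (l.prod * (M * R)))) := by rw [rel_piv_succ]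
          _ = vG n * ((pw (opiG (n+1)) e * vG n) * (pw (piG (n+1)) e *
                (pw (piG n) e * (l.prod * (M * R))))) := by group
          _ = vG n * ((vG n * pw (opiG (n+2)) e) * (pw (piG (n+1)) e *
                (pw (piG n) e * (l.prod * (M * R))))) := by
              rw [rel_opiv_lt e (Nat.lt_succ_self n)]
          _ = vG n * (vG n * (pw (opiG (n+2)) e * (pw (piG (n+1)) e *
                (pw (piG n) e * (l.prod * (M * R)))))) := by group
      rw [chain]
      obtain ⟨l₁, M₁, k₁, R₁, hl₁, hlen₁, hM₁, hR₁, hEq₁⟩ := pi_into n e l hl hM hR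
      rw [hEq₁]
      obtain ⟨l₂, M₂, k₂, R₂, hl₂, hlen₂, hM₂, hR₂, hEq₂⟩ := pi_into (n+1) e l₁ hl₁ hM₁ hR₁
      rw [hEq₂]
      exact isLMR_v n (isLMR_v n
        (IH l₂ (by rw [hlen₂, hlen₁, hlen]) hl₂ (n+2) e M₂ k₂ R₂ hM₂ hR₂))
  | succ d ihd =>
      intro n m hm e l hlen hl M k R hM hR
      have hgt : n + 1 < m := by omega
      have chain : pw (opiG n) e * (vG m * (l.prod * (M * R)))
          = vG n * (pw (opiG (n+1)) e * (vG m * (pw (piG n) e * (l.prod * (M * R))))) := by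
        calc pw (opiG n) e * (vG m * (l.prod * (M * R)))
            = (vG n * (pw (opiG (n+1)) e * pw (piG n) e)) * (vG m * (l.prod * (M * R))) := by
              rw [← rel_K1]
          _ = vG n * (pw (opiG (n+1)) e * ((pw (piG n) e * vG m) * (l.prod * (M * R)))) := by
              group
          _ = vG n * (pw (opiG (n+1)) e * ((vG m * pw (piG n) e) * (l.prod * (M * R)))) := by
              rw [rel_piv_gt e hgt]
          _ = vG n * (pw (opiG (n+1)) e * (vG m * (pw (piG n) e * (l.prod * (M * R))))) := by
              group
      rw [chain]
      obtain ⟨l₁, M₁, k₁, R₁, hl₁, hlen₁, hM₁, hR₁, hEq₁⟩ := pi_into n e l hl hM hR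
      rw [hEq₁]
      exact isLMR_v n (ihd (n+1) m (by omega) e l₁ (by rw [hlen₁, hlen]) hl₁ M₁ k₁ R₁ hM₁ hR₁)

lemma opi_into : ∀ (ℓ : ℕ) (l : List GBV), l.length = ℓ → (∀ y ∈ l, y ∈ Vset) →
    ∀ (n : ℕ) (e : Bool) (M : GBV) (k : ℕ) (R : GBV), M ∈ Hk k → R ∈ Wm →
    IsLMR (pw (opiG n) e * (l.prod * (M * R))) := by
  intro ℓ
  induction ℓ using Nat.strong_induction_on with
  | _ ℓ IH =>
    intro l hlen hl n e M k R hM hR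
    cases l with
    | nil => simpa using opi_base n e hM hR
    | cons y l₀ =>
        have hy : y ∈ Vset := hl y List.mem_cons_self
        obtain ⟨m, rfl⟩ := hy
        have hl₀ : ∀ z ∈ l₀, z ∈ Vset := fun z hz => hl z (List.mem_cons_of_mem _ hz)
        have hlt : l₀.length < ℓ := by rw [← hlen]; simp
        rcases lt_trichotomy m n with hmn | rfl | hnm
        · have chain : pw (opiG n) e * ((vG m :: l₀).prod * (M * R))
              = vG m * (pw (opiG (n+1)) e * (l₀.prod * (M * R))) := by
            calc pw (opiG n) e * ((vG m :: l₀).prod * (M * R))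
                = (pw (opiG n) e * vG m) * (l₀.prod * (M * R)) := by
                  rw [List.prod_cons]; group
              _ = (vG m * pw (opiG (n+1)) e) * (l₀.prod * (M * R)) := by
                  rw [rel_opiv_lt e hmn]
              _ = vG m * (pw (opiG (n+1)) e * (l₀.prod * (M * R))) := by group
          rw [chain]
          exact isLMR_v m (IH l₀.length hlt l₀ rfl hl₀ (n+1) e M k R hM hR)
        · have chain : pw (opiG m) e * ((vG m :: l₀).prod * (M * R))
              = pw (piG m) e * (pw (opiG (m+1)) e * (l₀.prod * (M * R))) := by
            calc pw (opiG m) e * ((vG m :: l₀).prod * (M * R))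
                = (pw (opiG m) e * vG m) * (l₀.prod * (M * R)) := by
                  rw [List.prod_cons]; group
              _ = (pw (piG m) e * pw (opiG (m+1)) e) * (l₀.prod * (M * R)) := by
                  rw [rel_opiv_eq]
              _ = pw (piG m) e * (pw (opiG (m+1)) e * (l₀.prod * (M * R))) := by group
          rw [chain]
          exact isLMR_pi m e (IH l₀.length hlt l₀ rfl hl₀ (m+1) e M k R hM hR)
        · have chain : pw (opiG n) e * ((vG m :: l₀).prod * (M * R))
              = pw (opiG n) e * (vG m * (l₀.prod * (M * R))) := by
            rw [List.prod_cons]; group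
          rw [chain]
          exact opi_gap l₀.length
            (fun l' hlen' hl' n' e' M' k' R' hM' hR' =>
              IH l₀.length hlt l' hlen' hl' n' e' M' k' R' hM' hR')
            (m - n - 1) n m (by omega) e l₀ rfl hl₀ M k R hM hR

lemma isLMR_opi (n : ℕ) (e : Bool) {g : GBV} (h : IsLMR g) : IsLMR (pw (opiG n) e * g) := by
  obtain ⟨L, M, R, k, hL, hM, hR, rfl⟩ := h
  obtain ⟨l, hl, rfl⟩ := Submonoid.exists_list_of_mem_closure hL
  exact opi_into l.length l rfl hl n e M k R hM hR

lemma isLMR_pi1 (i : ℕ) {g : GBV} (h : IsLMR g) : IsLMR (piG i * g) := by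
  simpa using isLMR_pi i true h

lemma isLMR_pi2 (i : ℕ) {g : GBV} (h : IsLMR g) : IsLMR ((piG i)⁻¹ * g) := by
  simpa using isLMR_pi i false h

lemma isLMR_opi1 (i : ℕ) {g : GBV} (h : IsLMR g) : IsLMR (opiG i * g) := by
  simpa using isLMR_opi i true h

lemma isLMR_opi2 (i : ℕ) {g : GBV} (h : IsLMR g) : IsLMR ((opiG i)⁻¹ * g) := by
  simpa using isLMR_opi i false h

lemma isLMR_all (g : GBV) : IsLMR g := by
  have hg : g ∈ (⊤ : Subgroup GBV) := trivial
  rw [← PresentedGroup.closure_range_of gbvRels] at hg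
  have hg2 : g ∈ Submonoid.closure
      ((Set.range (PresentedGroup.of : (ℕ ⊕ ℕ ⊕ ℕ) → GBV)) ∪
        (Set.range (PresentedGroup.of : (ℕ ⊕ ℕ ⊕ ℕ) → GBV))⁻¹) := by
    rw [← Subgroup.closure_toSubmonoid]
    exact hg
  clear hg
  have main : ∀ g', IsLMR g' → IsLMR (g * g') := by
    induction hg2 using Submonoid.closure_induction with
    | mem x hx =>
        rcases hx with ⟨a, rfl⟩ | hx
        · rcases a with i | i | i
          · exact fun g' h => isLMR_v i h
          · exact fun g' h => isLMR_pi1 i h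
          · exact fun g' h => isLMR_opi1 i h
        · rw [Set.mem_inv] at hx
          obtain ⟨a, ha⟩ := hx
          have hxa : (PresentedGroup.of a : GBV)⁻¹ = x := by rw [ha, inv_inv]
          subst hxa
          rcases a with i | i | i
          · exact fun g' h => isLMR_vinv i h
          · exact fun g' h => isLMR_pi2 i h
          · exact fun g' h => isLMR_opi2 i h
    | one => exact fun g' h => by simpa using h
    | mul a b _ _ ha hb =>
        intro g' h
        rw [mul_assoc]
        exact ha _ (hb _ h)
  simpa using main 1 isLMR_one

end LMRProof

/-- Lemma: every element of `G_BV` can be written `L·M·R` with `L` in the submonoid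
generated by the `v_i`, `R` in the submonoid generated by the `v_i⁻¹`, and `M` of
height containing some `h ≥ 1`. -/
theorem LMR_form_with_height (g : GBV) :
    ∃ L ∈ Submonoid.closure {x : GBV | ∃ i, x = vG i},
    ∃ R ∈ Submonoid.closure {x : GBV | ∃ i, x = (vG i)⁻¹},
    ∃ (M : GBV) (h : ℕ), 1 ≤ h ∧ HeightContains h M ∧ g = L * M * R := by
  obtain ⟨L, M, R, k, hL, hM, hR, hEq⟩ := LMRProof.isLMR_all g
  refine ⟨L, hL, R, hR, M, k+1, by omega, ?_, by rw [hEq, mul_assoc]⟩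
  have hset : ({x : GBV | ∃ i, i + 2 ≤ k+1 ∧ x = piG i} ∪ {opiG (k+1-1)})
      = LMRProof.hSet k := by
    rw [Nat.add_sub_cancel]
    have h1 : {x : GBV | ∃ i, i + 2 ≤ k+1 ∧ x = piG i}
        = {x : GBV | ∃ i, i + 1 ≤ k ∧ x = piG i} := by
      ext x
      constructor
      · rintro ⟨i, hi, rfl⟩; exact ⟨i, by omega, rfl⟩
      · rintro ⟨i, hi, rfl⟩; exact ⟨i, by omega, rfl⟩
    rw [h1]
    rfl
  show M ∈ Subgroup.closure
    ({x : GBV | ∃ i, i + 2 ≤ k+1 ∧ x = piG i} ∪ {opiG (k+1-1)})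
  rw [hset]
  exact hM

end BrinStmt12
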